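/- Let P be a connected subgraph of the grid graph ℤ² and s a vertex of P. Suppose v = (x,y), v_l = (x−1,y), v_r = (x+1,y) are all vertices of P. Then it is impossible that d(v,s) > d(v_l,s) and d(v,s) > d(v_r,s) and additionally every lattice point strictly between any two vertices of P at the same x-coordinate on shortest paths lies in P, unless P has a hole (the complement of V(P) in the grid graph is disconnected). -/

import Mathlib

def gridGraph : SimpleGraph (ℤ × ℤ) where
  Adj u v := |u.1 - v.1| + |u.2 - v.2| = 1
  symm := by
    constructor
    intro u v h
    beta_reduce at h ⊢
    rw [abs_sub_comm v.1, abs_sub_comm v.2]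
    exact h
  loopless := by
    constructor
    intro u h
    simp at h

namespace CPIH

abbrev Pt := ℤ × ℤ

def steps (l : List Pt) : List (Pt × Pt) := l.zip l.tail

def chi (F : Pt) (p q : Pt) : ℤ :=
  if q.1 = p.1 ∧ q.2 = p.2 + 1 ∧ p.2 = F.2 ∧ F.1 < p.1 then 1
  else if q.1 = p.1 ∧ p.2 = q.2 + 1 ∧ q.2 = F.2 ∧ F.1 < q.1 then -1
  else 0

def nu (X Y : ℤ) (p q : Pt) : ℤ :=
  if p.1 = X ∧ p.2 = Y ∧ q.1 = X ∧ q.2 = Y + 1 then 1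
  else if p.1 = X ∧ p.2 = Y + 1 ∧ q.1 = X ∧ q.2 = Y then -1
  else 0

def eta (X Y : ℤ) (p q : Pt) : ℤ :=
  if p.1 = X ∧ p.2 = Y ∧ q.1 = X + 1 ∧ q.2 = Y then 1
  else if p.1 = X + 1 ∧ p.2 = Y ∧ q.1 = X ∧ q.2 = Y then -1
  else 0

def esum (l : List Pt) (f : Pt → Pt → ℤ) : ℤ := ((steps l).map fun st => f st.1 st.2).sum

def wind (l : List Pt) (F : Pt) : ℤ := esum l (chi F)

lemma steps_cons₂ (a b : Pt) (l : List Pt) :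
    steps (a :: b :: l) = (a, b) :: steps (b :: l) := by
  simp [steps]

lemma mem_steps : ∀ (l : List Pt) (pq : Pt × Pt), pq ∈ steps l → pq.1 ∈ l ∧ pq.2 ∈ l := by
  intro l
  induction l with
  | nil => simp [steps]
  | cons a t ih =>
    intro pq hpq
    cases t with
    | nil => simp [steps] at hpq
    | cons b t' =>
      rw [steps_cons₂] at hpq
      rcases List.mem_cons.1 hpq with h | h
      · subst h; constructor <;> simp
      · have := ih pq h
        exact ⟨List.mem_cons_of_mem _ this.1, List.mem_cons_of_mem _ this.2⟩

lemma chain'_steps {R : Pt → Pt → Prop} : ∀ (l : List Pt), l.Chain' R →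
    ∀ pq ∈ steps l, R pq.1 pq.2 := by
  intro l
  induction l with
  | nil => simp [steps]
  | cons a t ih =>
    intro hch pq hpq
    cases t with
    | nil => simp [steps] at hpq
    | cons b t' =>
      rw [steps_cons₂] at hpq
      rw [List.Chain', List.isChain_cons_cons] at hch
      rcases List.mem_cons.1 hpq with h | h
      · subst h; exact hch.1
      · exact ih hch.2 pq h

lemma steps_append_single : ∀ (l : List Pt) (h : l ≠ []) (b : Pt),
    steps (l ++ [b]) = steps l ++ [(l.getLast h, b)] := by
  intro l
  induction l with
  | nil => intro h; simp at h
  | cons a t ih =>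
    intro _ b
    cases t with
    | nil => simp [steps]
    | cons c t' =>
      have : (a :: c :: t') ++ [b] = a :: ((c :: t') ++ [b]) := by simp
      rw [this]
      have h2 : (c :: t') ++ [b] = c :: (t' ++ [b]) := by simp
      rw [h2, steps_cons₂, ← h2, ih (by simp) b, steps_cons₂]
      simp [List.getLast_cons]

lemma sum_map_sub {α : Type*} (l : List α) (f g : α → ℤ) :
    (l.map fun x => f x - g x).sum = (l.map f).sum - (l.map g).sum := by
  induction l with
  | nil => simp
  | cons a t ih => simp only [List.map_cons, List.sum_cons, ih]; ring

lemma sum_map_add {α : Type*} (l : List α) (f g : α → ℤ) :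
    (l.map fun x => f x + g x).sum = (l.map f).sum + (l.map g).sum := by
  induction l with
  | nil => simp
  | cons a t ih => simp only [List.map_cons, List.sum_cons, ih]; ring

lemma esum_sub (l : List Pt) (f g : Pt → Pt → ℤ) :
    esum l (fun p q => f p q - g p q) = esum l f - esum l g := by
  simpa [esum] using sum_map_sub (steps l) (fun st => f st.1 st.2) (fun st => g st.1 st.2)

lemma esum_congr_steps (l : List Pt) (f g : Pt → Pt → ℤ)
    (h : ∀ pq ∈ steps l, f pq.1 pq.2 = g pq.1 pq.2) : esum l f = esum l g := by
  unfold esum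
  congr 1
  exact List.map_congr_left h

lemma esum_eq_zero (l : List Pt) (f : Pt → Pt → ℤ)
    (h : ∀ pq ∈ steps l, f pq.1 pq.2 = 0) : esum l f = 0 := by
  apply List.sum_eq_zero
  intro x hx
  rcases List.mem_map.1 hx with ⟨pq, hpq, rfl⟩
  exact h pq hpq

lemma steps_tele (ψ : Pt → ℤ) : ∀ (l : List Pt) (h : l ≠ []),
    esum l (fun p q => ψ q - ψ p) = ψ (l.getLast h) - ψ (l.head h) := by
  intro l
  induction l with
  | nil => intro h; simp at h
  | cons a t ih =>
    intro _
    cases t with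
    | nil => simp [esum, steps]
    | cons b t' =>
      have hne : (b :: t') ≠ [] := by simp
      have hrec := ih hne
      unfold esum at hrec ⊢
      rw [steps_cons₂]
      simp only [List.map_cons, List.sum_cons]
      rw [hrec]
      rw [List.getLast_cons hne, List.head_cons]
      simp only [List.head_cons] at *
      ring

end CPIH
namespace CPIH

lemma adj_cases {p q : Pt} (h : gridGraph.Adj p q) :
    (q.1 = p.1 ∧ q.2 = p.2 + 1) ∨ (q.1 = p.1 ∧ q.2 = p.2 - 1) ∨
    (q.2 = p.2 ∧ q.1 = p.1 + 1) ∨ (q.2 = p.2 ∧ q.1 = p.1 - 1) := by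
  have h' : |p.1 - q.1| + |p.2 - q.2| = 1 := h
  rcases abs_cases (p.1 - q.1) with ⟨h1, _⟩ | ⟨h1, _⟩ <;>
    rcases abs_cases (p.2 - q.2) with ⟨h2, _⟩ | ⟨h2, _⟩ <;> omega

lemma chi_sub_chi_horiz (X Y : ℤ) (p q : Pt) :
    chi (X, Y) p q - chi (X + 1, Y) p q = nu (X + 1) Y p q := by
  unfold chi nu
  split_ifs <;> omega

lemma wind_diff_horiz (l : List Pt) (X Y : ℤ) :
    wind l (X, Y) - wind l (X + 1, Y) = esum l (nu (X + 1) Y) := by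
  rw [wind, wind, ← esum_sub]
  exact esum_congr_steps l _ _ (fun pq _ => chi_sub_chi_horiz X Y pq.1 pq.2)

set_option maxHeartbeats 1000000 in
lemma vert_pointwise (X Y : ℤ) (p q : Pt) (hadj : gridGraph.Adj p q) :
    (if q.2 = Y + 1 ∧ X + 1 ≤ q.1 then (1:ℤ) else 0) -
    (if p.2 = Y + 1 ∧ X + 1 ≤ p.1 then (1:ℤ) else 0) =
    chi (X, Y) p q - chi (X, Y + 1) p q + eta X (Y + 1) p q := by
  obtain ⟨px, py⟩ := p
  obtain ⟨qx, qy⟩ := q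
  simp only [chi, eta, Prod.fst, Prod.snd]
  rcases adj_cases hadj with ⟨h1, h2⟩ | ⟨h1, h2⟩ | ⟨h1, h2⟩ | ⟨h1, h2⟩ <;>
    simp only at h1 h2 <;> subst h1 <;> subst h2 <;>
    split_ifs <;> omega

lemma wind_diff_vert (l : List Pt) (hne : l ≠ [])
    (hcl : l.head hne = l.getLast hne) (hch : l.Chain' gridGraph.Adj) (X Y : ℤ) :
    wind l (X, Y + 1) - wind l (X, Y) = esum l (eta X (Y + 1)) := by
  have h0 : esum l (fun p q =>
      (if q.2 = Y + 1 ∧ X + 1 ≤ q.1 then (1:ℤ) else 0) -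
      (if p.2 = Y + 1 ∧ X + 1 ≤ p.1 then (1:ℤ) else 0)) = 0 := by
    rw [steps_tele _ l hne, hcl]; ring
  have h1 : esum l (fun p q =>
      (if q.2 = Y + 1 ∧ X + 1 ≤ q.1 then (1:ℤ) else 0) -
      (if p.2 = Y + 1 ∧ X + 1 ≤ p.1 then (1:ℤ) else 0)) =
      esum l (fun p q => chi (X, Y) p q - chi (X, Y + 1) p q + eta X (Y + 1) p q) := by
    apply esum_congr_steps
    intro pq hpq
    exact vert_pointwise X Y pq.1 pq.2 (chain'_steps l hch pq hpq)
  have h2 : esum l (fun p q => chi (X, Y) p q - chi (X, Y + 1) p q + eta X (Y + 1) p q) =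
      wind l (X, Y) - wind l (X, Y + 1) + esum l (eta X (Y + 1)) := by
    unfold wind esum
    rw [← sum_map_sub, ← sum_map_add]
  rw [h1, h2] at h0
  linarith

lemma wind_high (l : List Pt) (B : ℤ) (hb : ∀ p ∈ l, p.2 ≤ B) (F : Pt) (hF : B < F.2) :
    wind l F = 0 := by
  apply esum_eq_zero
  intro pq hpq
  have hm := mem_steps l pq hpq
  have h1 := hb pq.1 hm.1
  have h2 := hb pq.2 hm.2
  unfold chi
  split_ifs <;> omega

lemma wind_low (l : List Pt) (B : ℤ) (hb : ∀ p ∈ l, B ≤ p.2) (F : Pt) (hF : F.2 < B) :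
    wind l F = 0 := by
  apply esum_eq_zero
  intro pq hpq
  have hm := mem_steps l pq hpq
  have h1 := hb pq.1 hm.1
  have h2 := hb pq.2 hm.2
  unfold chi
  split_ifs <;> omega

end CPIH
namespace CPIH

open SimpleGraph

lemma walk_split {V : Type*} {G : SimpleGraph V} [DecidableEq V] {a b : V}
    (w : G.Walk a b) (u : V) (hu : u ∈ w.support) :
    G.dist a u + G.dist u b ≤ w.length := by
  have h1 := SimpleGraph.dist_le (w.takeUntil u hu)
  have h2 := SimpleGraph.dist_le (w.dropUntil u hu)
  have h3 : (w.takeUntil u hu).length + (w.dropUntil u hu).length = w.length := by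
    rw [← SimpleGraph.Walk.length_append, SimpleGraph.Walk.take_spec]
  omega

lemma walk_l1 {S : Set Pt} {a b : ↥S} (w : (gridGraph.induce S).Walk a b) :
    |(a : Pt).1 - (b : Pt).1| + |(a : Pt).2 - (b : Pt).2| ≤ (w.length : ℤ) := by
  induction w with
  | nil => simp
  | @cons a c b hadj w ih =>
    have h1 : |(a : Pt).1 - (c : Pt).1| + |(a : Pt).2 - (c : Pt).2| = 1 := hadj
    have t1 := abs_sub_le (a : Pt).1 (c : Pt).1 (b : Pt).1
    have t2 := abs_sub_le (a : Pt).2 (c : Pt).2 (b : Pt).2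
    rw [SimpleGraph.Walk.length_cons]
    push_cast
    linarith

lemma eta_ne_cases (X Y : ℤ) (p q : Pt) (h : eta X Y p q ≠ 0) :
    (p.1 = X ∧ p.2 = Y ∧ q.1 = X + 1 ∧ q.2 = Y) ∨
    (p.1 = X + 1 ∧ p.2 = Y ∧ q.1 = X ∧ q.2 = Y) := by
  unfold eta at h
  split_ifs at h with h1 h2
  · exact Or.inl h1
  · exact Or.inr h2
  · exact absurd rfl h

lemma nu_zero_of_ne (X Y : ℤ) (p q : Pt)
    (hp : ¬(p.1 = X ∧ p.2 = Y)) (hq : ¬(q.1 = X ∧ q.2 = Y)) : nu X Y p q = 0 := by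
  unfold nu; split_ifs <;> omega

lemma nu_zero' (X Y : ℤ) (p q : Pt)
    (hp : ¬(p.1 = X ∧ p.2 = Y + 1)) (hq : ¬(q.1 = X ∧ q.2 = Y + 1)) : nu X Y p q = 0 := by
  unfold nu; split_ifs <;> omega

lemma eta_zero' (X Y : ℤ) (p q : Pt)
    (hp : ¬(p.1 = X + 1 ∧ p.2 = Y)) (hq : ¬(q.1 = X + 1 ∧ q.2 = Y)) : eta X Y p q = 0 := by
  unfold eta; split_ifs <;> omega

lemma esum_of_steps_eq (l : List Pt) (f : Pt → Pt → ℤ) (a b c e : Pt) (M : List (Pt × Pt))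
    (h : steps l = (a, b) :: (M ++ [(c, e)])) :
    esum l f = f a b + ((M.map fun st => f st.1 st.2).sum + f c e) := by
  unfold esum; rw [h]; simp

lemma grid_adj_right (p : Pt) : gridGraph.Adj p (p.1 + 1, p.2) := by
  show |p.1 - (p.1 + 1)| + |p.2 - p.2| = 1
  have h : p.1 - (p.1 + 1) = -1 := by ring
  rw [h, sub_self, abs_neg, abs_one, abs_zero]; ring

lemma grid_adj_up (p : Pt) : gridGraph.Adj p (p.1, p.2 + 1) := by
  show |p.1 - p.1| + |p.2 - (p.2 + 1)| = 1
  have h : p.2 - (p.2 + 1) = -1 := by ring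
  rw [h, sub_self, abs_neg, abs_one, abs_zero]; ring

lemma grid_adj_coords {p q : Pt} (h1 : |p.1 - q.1| + |p.2 - q.2| = 1) : gridGraph.Adj p q := h1

lemma esum_ne_exists (l : List Pt) (f : Pt → Pt → ℤ) (h : esum l f ≠ 0) :
    ∃ pq ∈ steps l, f pq.1 pq.2 ≠ 0 := by
  by_contra hc
  push_neg at hc
  exact h (esum_eq_zero l f hc)

lemma getLast_eq_of_eq {l l' : List Pt} (h : l = l') (h1 : l ≠ []) (h2 : l' ≠ []) :
    l.getLast h1 = l'.getLast h2 := by subst h; rfl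

lemma steps_sandwich (a b hd : Pt) (tl : List Pt) :
    steps (a :: ((hd :: tl) ++ [b])) =
      (a, hd) :: (steps (hd :: tl) ++ [((hd :: tl).getLast (by simp), b)]) := by
  rw [List.cons_append, steps_cons₂, ← List.cons_append,
    steps_append_single (hd :: tl) (by simp) b]

lemma eta_val_1 (x y : ℤ) : eta (x - 1) y (x, y) (x - 1, y) = -1 := by
  unfold eta; split_ifs <;> omega

lemma eta_val_2 (x y : ℤ) : eta (x - 1) y (x + 1, y) (x, y) = 0 := by
  unfold eta; split_ifs <;> omega

lemma nu_val_1 (x y : ℤ) : nu x y (x, y) (x - 1, y) = 0 := by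
  unfold nu; split_ifs <;> omega

lemma nu_val_2 (x y : ℤ) : nu x y (x + 1, y) (x, y) = 0 := by
  unfold nu; split_ifs <;> omega

lemma nu_val_3 (x y : ℤ) : nu x (y - 1) (x, y) (x - 1, y) = 0 := by
  unfold nu; split_ifs <;> omega

lemma nu_val_4 (x y : ℤ) : nu x (y - 1) (x + 1, y) (x, y) = 0 := by
  unfold nu; split_ifs <;> omega

end CPIH

/-- Let `P` be a finite connected induced subgraph of the grid graph on `ℤ²`
(a polyomino) and `s` a vertex of `P`. If some vertex `v = (x,y)` of `P` has both
horizontal neighbors `(x-1,y)` and `(x+1,y)` in `P`, and `v` is strictly farther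
from `s` than both of them, then `P` has a hole: the subgraph of the grid graph
induced by the complement of `V(P)` is disconnected. -/
theorem collinear_pattern_implies_hole (S : Set (ℤ × ℤ)) (hS : S.Finite)
    (hconn : (gridGraph.induce S).Connected)
    (s v vl vr : S)
    (hvl : (vl : ℤ × ℤ) = ((v : ℤ × ℤ).1 - 1, (v : ℤ × ℤ).2))
    (hvr : (vr : ℤ × ℤ) = ((v : ℤ × ℤ).1 + 1, (v : ℤ × ℤ).2))
    (hl : (gridGraph.induce S).dist vl s < (gridGraph.induce S).dist v s)
    (hr : (gridGraph.induce S).dist vr s < (gridGraph.induce S).dist v s) :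
    ¬ (gridGraph.induce Sᶜ).Connected := by
  classical
  intro hcompl
  obtain ⟨x, y, hvpair⟩ : ∃ x y, (v : CPIH.Pt) = (x, y) := ⟨_, _, rfl⟩
  rw [hvpair] at hvl hvr
  simp only [] at hvl hvr
  obtain ⟨d, hd⟩ : ∃ d, (gridGraph.induce S).dist v s = d := ⟨_, rfl⟩
  rw [hd] at hl hr
  -- basic adjacencies
  have hadj_v_vl : gridGraph.Adj (v : CPIH.Pt) (vl : CPIH.Pt) := by
    rw [hvpair, hvl]
    apply CPIH.grid_adj_coords
    show |x - (x - 1)| + |y - y| = 1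
    rw [show x - (x - 1) = (1:ℤ) from by ring, sub_self, abs_one, abs_zero]; ring
  have hadj_v_vr : gridGraph.Adj (v : CPIH.Pt) (vr : CPIH.Pt) := by
    rw [hvpair, hvr]
    apply CPIH.grid_adj_coords
    show |x - (x + 1)| + |y - y| = 1
    rw [show x - (x + 1) = (-1:ℤ) from by ring, sub_self, abs_neg, abs_one, abs_zero]; ring
  have hadj_vr_v : gridGraph.Adj (vr : CPIH.Pt) (v : CPIH.Pt) := gridGraph.adj_symm hadj_v_vr
  have hadj_v_vl' : (gridGraph.induce S).Adj v vl := hadj_v_vl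
  have hadj_v_vr' : (gridGraph.induce S).Adj v vr := hadj_v_vr
  have hvlvr : vl ≠ vr := by
    intro h
    have : (vl : CPIH.Pt) = (vr : CPIH.Pt) := by rw [h]
    rw [hvl, hvr] at this
    have := congrArg Prod.fst this
    simp only [] at this
    omega
  have hdist_vvl : (gridGraph.induce S).dist v vl ≤ 1 := by
    simpa using SimpleGraph.dist_le (SimpleGraph.Walk.cons hadj_v_vl' SimpleGraph.Walk.nil)
  have hdist_vvr : (gridGraph.induce S).dist v vr ≤ 1 := by
    simpa using SimpleGraph.dist_le (SimpleGraph.Walk.cons hadj_v_vr' SimpleGraph.Walk.nil)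
  have h2d : 2 ≤ d := by
    by_contra hc
    push_neg at hc
    have hvl0 : (gridGraph.induce S).dist vl s = 0 := by omega
    have hvr0 : (gridGraph.induce S).dist vr s = 0 := by omega
    have e1 : vl = s := (hconn.dist_eq_zero_iff).mp hvl0
    have e2 : vr = s := (hconn.dist_eq_zero_iff).mp hvr0
    exact hvlvr (e1.trans e2.symm)
  have hreach := hconn.preconnected
  have hvrs : vr ≠ s := by
    intro h
    have h1 := hconn.dist_triangle (u := v) (v := vr) (w := s)
    rw [h, SimpleGraph.dist_self] at h1
    rw [hd] at h1
    have := hdist_vvr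
    rw [h] at this
    omega
  -- geodesics
  obtain ⟨γl, hγl⟩ := (hreach vl s).exists_walk_length_eq_dist
  obtain ⟨γr, hγr⟩ := (hreach vr s).exists_walk_length_eq_dist
  have hsplitl : ∀ u ∈ γl.support, (gridGraph.induce S).dist vl u + (gridGraph.induce S).dist u s ≤ d - 1 := by
    intro u hu
    have h1 := CPIH.walk_split γl u hu
    rw [hγl] at h1
    omega
  have hsplitr : ∀ u ∈ γr.support, (gridGraph.induce S).dist vr u + (gridGraph.induce S).dist u s ≤ d - 1 := by
    intro u hu
    have h1 := CPIH.walk_split γr u hu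
    rw [hγr] at h1
    omega
  have hdu : ∀ u : ↥S, (u ∈ γl.support ∨ u ∈ γr.support) → (gridGraph.induce S).dist u s ≤ d - 1 := by
    intro u hu
    rcases hu with hu | hu
    · have := hsplitl u hu; omega
    · have := hsplitr u hu; omega
  have hvnl : v ∉ γl.support := by
    intro hv
    have h1 := hsplitl v hv
    rw [hd] at h1
    omega
  have hvnr : v ∉ γr.support := by
    intro hv
    have h1 := hsplitr v hv
    rw [hd] at h1
    omega
  -- the closed loop
  let ι : (gridGraph.induce S) →g gridGraph := ⟨Subtype.val, fun {a b} h => h⟩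
  let wl : gridGraph.Walk (vl : CPIH.Pt) (s : CPIH.Pt) := γl.map ι
  let wr : gridGraph.Walk (vr : CPIH.Pt) (s : CPIH.Pt) := γr.map ι
  let ρ : gridGraph.Walk (s : CPIH.Pt) (vr : CPIH.Pt) := wr.reverse
  let W : gridGraph.Walk (v : CPIH.Pt) (v : CPIH.Pt) :=
    SimpleGraph.Walk.cons hadj_v_vl
      (wl.append (ρ.append (SimpleGraph.Walk.cons hadj_vr_v SimpleGraph.Walk.nil)))
  have hchain : W.support.Chain' gridGraph.Adj := W.isChain_adj_support
  have hne : W.support ≠ [] := W.support_ne_nil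
  have hhead : W.support.head hne = (v : CPIH.Pt) := W.head_support
  have hlast : W.support.getLast hne = (v : CPIH.Pt) := W.getLast_support
  have hclosed : W.support.head hne = W.support.getLast hne := by rw [hhead, hlast]
  have hWsup : W.support =
      (v : CPIH.Pt) :: (wl.support ++ (ρ.support.tail ++ [(v : CPIH.Pt)])) := by
    show (SimpleGraph.Walk.cons hadj_v_vl
      (wl.append (ρ.append (SimpleGraph.Walk.cons hadj_vr_v SimpleGraph.Walk.nil)))).support = _
    rw [SimpleGraph.Walk.support_cons]
    congr 1
    rw [SimpleGraph.Walk.support_append, SimpleGraph.Walk.support_append]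
    congr 1
    rw [show (SimpleGraph.Walk.cons hadj_vr_v (SimpleGraph.Walk.nil) :
        gridGraph.Walk (vr : CPIH.Pt) (v : CPIH.Pt)).support.tail = [(v : CPIH.Pt)] from rfl]
    rw [List.tail_append_of_ne_nil ρ.support_ne_nil]
  have hmemC : ∀ p ∈ W.support, p = (v : CPIH.Pt) ∨
      (∃ u ∈ γl.support, (u : CPIH.Pt) = p) ∨ (∃ u ∈ γr.support, (u : CPIH.Pt) = p) := by
    intro p hp
    rw [hWsup] at hp
    simp only [List.mem_cons, List.mem_append, List.mem_singleton, List.not_mem_nil, or_false] at hp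
    rcases hp with h | h | h | h
    · exact Or.inl h
    · have h' : p ∈ (γl.map ι).support := h
      rw [SimpleGraph.Walk.support_map] at h'
      obtain ⟨u, hu, hι⟩ := List.mem_map.1 h'
      exact Or.inr (Or.inl ⟨u, hu, hι⟩)
    · have h2 : p ∈ ρ.support := List.mem_of_mem_tail h
      have h3 : p ∈ (γr.map ι).support.reverse := by
        have e : ρ.support = (γr.map ι).support.reverse := SimpleGraph.Walk.support_reverse _
        rwa [e] at h2
      rw [List.mem_reverse, SimpleGraph.Walk.support_map] at h3
      obtain ⟨u, hu, hι⟩ := List.mem_map.1 h3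
      exact Or.inr (Or.inr ⟨u, hu, hι⟩)
    · exact Or.inl h
  have hCS : ∀ p ∈ W.support, p ∈ S := by
    intro p hp
    rcases hmemC p hp with h | ⟨u, _, h⟩ | ⟨u, _, h⟩
    · rw [h]; exact v.2
    · rw [← h]; exact u.2
    · rw [← h]; exact u.2
  have hγrlen : 1 ≤ γr.length := by
    rw [hγr]
    rcases Nat.eq_zero_or_pos ((gridGraph.induce S).dist vr s) with h0 | h0
    · exact absurd ((hconn.dist_eq_zero_iff).mp h0) hvrs
    · omega
  have hTlen : ρ.support.tail.length = γr.length := by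
    have e1 : ρ.support.length = γr.length + 1 := by
      show (γr.map ι).reverse.support.length = _
      rw [SimpleGraph.Walk.length_support, SimpleGraph.Walk.length_reverse,
        SimpleGraph.Walk.length_map]
    have e2 : ρ.support.length = ρ.support.tail.length + 1 := by
      conv_lhs => rw [ρ.support_eq_cons]
      rw [List.length_cons]
    omega
  have hTne : ρ.support.tail ≠ [] := by
    intro h
    rw [h] at hTlen
    simp at hTlen
    omega
  have hMne : wl.support ++ ρ.support.tail ≠ [] := by
    intro h
    rw [List.append_eq_nil_iff] at h
    exact wl.support_ne_nil h.1
  have hMidlast : (wl.support ++ ρ.support.tail).getLast hMne = (vr : CPIH.Pt) := by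
    have h1 : ρ.support.getLast ρ.support_ne_nil = (vr : CPIH.Pt) := ρ.getLast_support
    have h2 : ρ.support.getLast ρ.support_ne_nil = (ρ.support.tail).getLast hTne := by
      have e := ρ.support_eq_cons
      rw [CPIH.getLast_eq_of_eq e ρ.support_ne_nil (by rw [← e]; exact ρ.support_ne_nil)]
      exact List.getLast_cons hTne
    calc (wl.support ++ ρ.support.tail).getLast hMne
        = ρ.support.tail.getLast hTne := List.getLast_append_of_ne_nil _ hTne
      _ = ρ.support.getLast ρ.support_ne_nil := h2.symm
      _ = (vr : CPIH.Pt) := h1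
  obtain ⟨r, hrdec⟩ : ∃ r, wl.support ++ ρ.support.tail = (vl : CPIH.Pt) :: r := by
    refine ⟨wl.support.tail ++ ρ.support.tail, ?_⟩
    conv_lhs => rw [wl.support_eq_cons]
    exact List.cons_append
  have hstepsC : CPIH.steps W.support =
      ((v : CPIH.Pt), (vl : CPIH.Pt)) ::
        (CPIH.steps (wl.support ++ ρ.support.tail) ++ [((vr : CPIH.Pt), (v : CPIH.Pt))]) := by
    have h1 : W.support = (v : CPIH.Pt) :: (((vl : CPIH.Pt) :: r) ++ [(v : CPIH.Pt)]) := by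
      rw [hWsup, ← List.append_assoc, hrdec]
    have h3 : (((vl : CPIH.Pt) :: r)).getLast (by simp) = (vr : CPIH.Pt) := by
      rw [CPIH.getLast_eq_of_eq hrdec.symm (by simp) hMne]
      exact hMidlast
    rw [h1, CPIH.steps_sandwich, h3, hrdec]
  have hvMid : (v : CPIH.Pt) ∉ wl.support ++ ρ.support.tail := by
    intro hmem
    rw [List.mem_append] at hmem
    rcases hmem with h | h
    · have h' : (v : CPIH.Pt) ∈ (γl.map ι).support := h
      rw [SimpleGraph.Walk.support_map] at h'
      obtain ⟨u, hu, hι⟩ := List.mem_map.1 h'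
      have : u = v := Subtype.ext hι
      rw [this] at hu; exact hvnl hu
    · have h2 : (v : CPIH.Pt) ∈ ρ.support := List.mem_of_mem_tail h
      have h3 : (v : CPIH.Pt) ∈ (γr.map ι).support.reverse := by
        have e : ρ.support = (γr.map ι).support.reverse := SimpleGraph.Walk.support_reverse _
        rwa [e] at h2
      rw [List.mem_reverse, SimpleGraph.Walk.support_map] at h3
      obtain ⟨u, hu, hι⟩ := List.mem_map.1 h3
      have : u = v := Subtype.ext hι
      rw [this] at hu; exact hvnr hu
  have hMidcoords : ∀ pq ∈ CPIH.steps (wl.support ++ ρ.support.tail),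
      ¬(pq.1.1 = x ∧ pq.1.2 = y) ∧ ¬(pq.2.1 = x ∧ pq.2.2 = y) := by
    intro pq hpq
    have hm := CPIH.mem_steps _ pq hpq
    constructor
    · intro hc
      apply hvMid
      have h : pq.1 = ((x, y) : CPIH.Pt) := Prod.ext hc.1 hc.2
      rw [← hvpair] at h
      rw [← h]
      exact hm.1
    · intro hc
      apply hvMid
      have h : pq.2 = ((x, y) : CPIH.Pt) := Prod.ext hc.1 hc.2
      rw [← hvpair] at h
      rw [← h]
      exact hm.2
  have hE1 : CPIH.esum W.support (CPIH.eta (x - 1) y) = -1 := by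
    rw [CPIH.esum_of_steps_eq _ _ _ _ _ _ _ hstepsC]
    have hmid : ((CPIH.steps (wl.support ++ ρ.support.tail)).map
        fun st => CPIH.eta (x - 1) y st.1 st.2).sum = 0 := by
      apply List.sum_eq_zero
      intro z hz
      rcases List.mem_map.1 hz with ⟨pq, hpq, rfl⟩
      have h := hMidcoords pq hpq
      refine CPIH.eta_zero' _ _ _ _ ?_ ?_
      · intro hc; exact h.1 ⟨by omega, hc.2⟩
      · intro hc; exact h.2 ⟨by omega, hc.2⟩
    rw [hmid, hvl, hvr, hvpair, CPIH.eta_val_1, CPIH.eta_val_2]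
    ring
  have hE2 : CPIH.esum W.support (CPIH.nu x y) = 0 := by
    rw [CPIH.esum_of_steps_eq _ _ _ _ _ _ _ hstepsC]
    have hmid : ((CPIH.steps (wl.support ++ ρ.support.tail)).map
        fun st => CPIH.nu x y st.1 st.2).sum = 0 := by
      apply List.sum_eq_zero
      intro z hz
      rcases List.mem_map.1 hz with ⟨pq, hpq, rfl⟩
      have h := hMidcoords pq hpq
      exact CPIH.nu_zero_of_ne _ _ _ _ h.1 h.2
    rw [hmid, hvl, hvr, hvpair, CPIH.nu_val_1, CPIH.nu_val_2]
    ring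
  have hE3 : CPIH.esum W.support (CPIH.nu x (y - 1)) = 0 := by
    rw [CPIH.esum_of_steps_eq _ _ _ _ _ _ _ hstepsC]
    have hmid : ((CPIH.steps (wl.support ++ ρ.support.tail)).map
        fun st => CPIH.nu x (y - 1) st.1 st.2).sum = 0 := by
      apply List.sum_eq_zero
      intro z hz
      rcases List.mem_map.1 hz with ⟨pq, hpq, rfl⟩
      have h := hMidcoords pq hpq
      refine CPIH.nu_zero' _ _ _ _ ?_ ?_
      · intro hc; exact h.1 ⟨hc.1, by omega⟩
      · intro hc; exact h.2 ⟨hc.1, by omega⟩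
    rw [hmid, hvl, hvr, hvpair, CPIH.nu_val_3, CPIH.nu_val_4]
    ring
  have hAA' : CPIH.wind W.support (x - 1, y) = CPIH.wind W.support (x, y) := by
    have h := CPIH.wind_diff_horiz W.support (x - 1) y
    rw [show x - 1 + 1 = x from by ring, hE2] at h
    omega
  have hBB' : CPIH.wind W.support (x - 1, y - 1) = CPIH.wind W.support (x, y - 1) := by
    have h := CPIH.wind_diff_horiz W.support (x - 1) (y - 1)
    rw [show x - 1 + 1 = x from by ring, hE3] at h
    omega
  have hAB : CPIH.wind W.support (x - 1, y) - CPIH.wind W.support (x - 1, y - 1) = -1 := by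
    have h := CPIH.wind_diff_vert W.support hne hclosed hchain (x - 1) (y - 1)
    rw [show y - 1 + 1 = y from by ring, hE1] at h
    omega
  have hstepSmem : ∀ pq ∈ CPIH.steps W.support, pq.1 ∈ S ∧ pq.2 ∈ S := by
    intro pq hpq
    have hm := CPIH.mem_steps _ pq hpq
    exact ⟨hCS _ hm.1, hCS _ hm.2⟩
  have hK1 : ∀ a b : ℤ, (a, b) ∉ S →
      (CPIH.wind W.support (a - 1, b) = CPIH.wind W.support (a, b) ∧
       CPIH.wind W.support (a - 1, b - 1) = CPIH.wind W.support (a, b - 1) ∧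
       CPIH.wind W.support (a - 1, b - 1) = CPIH.wind W.support (a - 1, b)) := by
    intro a b hab
    have hzp : ∀ pq ∈ CPIH.steps W.support,
        ¬(pq.1.1 = a ∧ pq.1.2 = b) ∧ ¬(pq.2.1 = a ∧ pq.2.2 = b) := by
      intro pq hpq
      have hm := hstepSmem pq hpq
      constructor
      · intro hc
        apply hab
        have h : pq.1 = ((a, b) : CPIH.Pt) := Prod.ext hc.1 hc.2
        rw [← h]; exact hm.1
      · intro hc
        apply hab
        have h : pq.2 = ((a, b) : CPIH.Pt) := Prod.ext hc.1 hc.2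
        rw [← h]; exact hm.2
    refine ⟨?_, ?_, ?_⟩
    · have h := CPIH.wind_diff_horiz W.support (a - 1) b
      rw [show a - 1 + 1 = a from by ring] at h
      have h0 : CPIH.esum W.support (CPIH.nu a b) = 0 :=
        CPIH.esum_eq_zero _ _ fun pq hpq =>
          CPIH.nu_zero_of_ne _ _ _ _ (hzp pq hpq).1 (hzp pq hpq).2
      rw [h0] at h
      omega
    · have h := CPIH.wind_diff_horiz W.support (a - 1) (b - 1)
      rw [show a - 1 + 1 = a from by ring] at h
      have h0 : CPIH.esum W.support (CPIH.nu a (b - 1)) = 0 :=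
        CPIH.esum_eq_zero _ _ fun pq hpq =>
          CPIH.nu_zero' _ _ _ _
            (fun hc => (hzp pq hpq).1 ⟨hc.1, by omega⟩)
            (fun hc => (hzp pq hpq).2 ⟨hc.1, by omega⟩)
      rw [h0] at h
      omega
    · have h := CPIH.wind_diff_vert W.support hne hclosed hchain (a - 1) (b - 1)
      rw [show b - 1 + 1 = b from by ring] at h
      have h0 : CPIH.esum W.support (CPIH.eta (a - 1) b) = 0 :=
        CPIH.esum_eq_zero _ _ fun pq hpq =>
          CPIH.eta_zero' _ _ _ _
            (fun hc => (hzp pq hpq).1 ⟨by omega, hc.2⟩)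
            (fun hc => (hzp pq hpq).2 ⟨by omega, hc.2⟩)
      rw [h0] at h
      omega
  have hK2 : ∀ z w : CPIH.Pt, z ∉ S → w ∉ S → gridGraph.Adj z w →
      CPIH.wind W.support (z.1, z.2) = CPIH.wind W.support (w.1, w.2) := by
    intro z w hz hw hadjzw
    have hz' : ((z.1, z.2) : CPIH.Pt) ∉ S := by rw [Prod.mk.eta]; exact hz
    have hw' : ((w.1, w.2) : CPIH.Pt) ∉ S := by rw [Prod.mk.eta]; exact hw
    obtain ⟨k1, k2, k3⟩ := hK1 z.1 z.2 hz'
    obtain ⟨m1, m2, m3⟩ := hK1 w.1 w.2 hw'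
    rcases CPIH.adj_cases hadjzw with ⟨h1, h2⟩ | ⟨h1, h2⟩ | ⟨h1, h2⟩ | ⟨h1, h2⟩
    · have e : ((w.1 : ℤ), (w.2 - 1 : ℤ)) = (z.1, z.2) := by
        rw [Prod.mk.injEq]; constructor <;> omega
      calc CPIH.wind W.support (z.1, z.2)
          = CPIH.wind W.support (w.1, w.2 - 1) := by rw [e]
        _ = CPIH.wind W.support (w.1 - 1, w.2 - 1) := m2.symm
        _ = CPIH.wind W.support (w.1 - 1, w.2) := m3
        _ = CPIH.wind W.support (w.1, w.2) := m1
    · have e : ((z.1 : ℤ), (z.2 - 1 : ℤ)) = (w.1, w.2) := by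
        rw [Prod.mk.injEq]; constructor <;> omega
      calc CPIH.wind W.support (z.1, z.2)
          = CPIH.wind W.support (z.1 - 1, z.2) := k1.symm
        _ = CPIH.wind W.support (z.1 - 1, z.2 - 1) := k3.symm
        _ = CPIH.wind W.support (z.1, z.2 - 1) := k2
        _ = CPIH.wind W.support (w.1, w.2) := by rw [e]
    · have e : ((w.1 - 1 : ℤ), (w.2 : ℤ)) = (z.1, z.2) := by
        rw [Prod.mk.injEq]; constructor <;> omega
      calc CPIH.wind W.support (z.1, z.2)
          = CPIH.wind W.support (w.1 - 1, w.2) := by rw [e]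
        _ = CPIH.wind W.support (w.1, w.2) := m1
    · have e : ((z.1 - 1 : ℤ), (z.2 : ℤ)) = (w.1, w.2) := by
        rw [Prod.mk.injEq]; constructor <;> omega
      calc CPIH.wind W.support (z.1, z.2)
          = CPIH.wind W.support (z.1 - 1, z.2) := k1.symm
        _ = CPIH.wind W.support (w.1, w.2) := by rw [e]
  obtain ⟨B, hB⟩ : ∃ B : ℤ, ∀ p ∈ S, p.2 ≤ B := by
    obtain ⟨B, hB⟩ := (hS.image Prod.snd).bddAbove
    exact ⟨B, fun p hp => hB (Set.mem_image_of_mem _ hp)⟩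
  obtain ⟨B', hB'⟩ : ∃ B' : ℤ, ∀ p ∈ S, B' ≤ p.2 := by
    obtain ⟨B', hB'⟩ := (hS.image Prod.snd).bddBelow
    exact ⟨B', fun p hp => hB' (Set.mem_image_of_mem _ hp)⟩
  have hsupB : ∀ p ∈ W.support, p.2 ≤ B := fun p hp => hB p (hCS p hp)
  have hsupB' : ∀ p ∈ W.support, B' ≤ p.2 := fun p hp => hB' p (hCS p hp)
  have hK5 : ∀ z : CPIH.Pt, z ∉ S → CPIH.wind W.support (z.1, z.2) = 0 := by
    intro z hz
    have hq : (((0 : ℤ), B + 1) : CPIH.Pt) ∉ S := by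
      intro hc
      have h : B + 1 ≤ B := hB _ hc
      omega
    obtain ⟨wk⟩ := hcompl.preconnected ⟨z, hz⟩ ⟨((0 : ℤ), B + 1), hq⟩
    have hval : ∀ (a b : ↥(Sᶜ)) (wk : (gridGraph.induce Sᶜ).Walk a b),
        CPIH.wind W.support ((a : CPIH.Pt).1, (a : CPIH.Pt).2) =
        CPIH.wind W.support ((b : CPIH.Pt).1, (b : CPIH.Pt).2) := by
      intro a b wk
      induction wk with
      | nil => rfl
      | @cons a c b hadjac wk ih =>
        have h1 : CPIH.wind W.support ((a : CPIH.Pt).1, (a : CPIH.Pt).2) =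
            CPIH.wind W.support ((c : CPIH.Pt).1, (c : CPIH.Pt).2) :=
          hK2 _ _ a.2 c.2 hadjac
        rw [h1]; exact ih
    have h2 := hval _ _ wk
    rw [h2]
    refine CPIH.wind_high W.support B hsupB _ ?_
    show B < B + 1
    omega
  have hL6 : ∀ XX YY : ℤ, CPIH.wind W.support (XX, YY) ≠ 0 →
      ((XX, YY) : CPIH.Pt) ∈ S ∧ ((XX + 1, YY) : CPIH.Pt) ∈ S ∧
      ((XX, YY + 1) : CPIH.Pt) ∈ S ∧ ((XX + 1, YY + 1) : CPIH.Pt) ∈ S := by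
    intro XX YY hw
    refine ⟨?_, ?_, ?_, ?_⟩
    · by_contra hc
      exact hw (hK5 (XX, YY) hc)
    · by_contra hc
      obtain ⟨k1, k2, k3⟩ := hK1 (XX + 1) YY hc
      rw [show (XX : ℤ) + 1 - 1 = XX from by ring] at k1
      have h5 : CPIH.wind W.support (XX + 1, YY) = 0 := hK5 ((XX + 1, YY)) hc
      apply hw
      omega
    · by_contra hc
      obtain ⟨k1, k2, k3⟩ := hK1 XX (YY + 1) hc
      rw [show (YY : ℤ) + 1 - 1 = YY from by ring] at k2 k3
      have h5 : CPIH.wind W.support (XX, YY + 1) = 0 := hK5 ((XX, YY + 1)) hc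
      apply hw
      omega
    · by_contra hc
      obtain ⟨k1, k2, k3⟩ := hK1 (XX + 1) (YY + 1) hc
      rw [show (XX : ℤ) + 1 - 1 = XX from by ring] at k1 k2 k3
      rw [show (YY : ℤ) + 1 - 1 = YY from by ring] at k2 k3
      have h5 : CPIH.wind W.support (XX + 1, YY + 1) = 0 := hK5 ((XX + 1, YY + 1)) hc
      apply hw
      omega
  rcases eq_or_ne (CPIH.wind W.support (x - 1, y)) 0 with hA0 | hA0
  · -- DOWN case
    have hC0 : CPIH.wind W.support (x - 1, y - 1) ≠ 0 := by omega
    have hex : ∃ n : ℕ, ¬ (∀ j : ℕ, j ≤ n →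
        CPIH.wind W.support (x - 1, y - 1 - (j : ℤ)) = CPIH.wind W.support (x - 1, y - 1) ∧
        CPIH.wind W.support (x, y - 1 - (j : ℤ)) = CPIH.wind W.support (x - 1, y - 1)) := by
      refine ⟨(y - B').toNat + 1, fun hQ => ?_⟩
      have h1 := (hQ ((y - B').toNat + 1) le_rfl).1
      have h2 : ((x - 1 : ℤ), y - 1 - (((y - B').toNat + 1 : ℕ) : ℤ)).2 < B' := by
        show y - 1 - (((y - B').toNat + 1 : ℕ) : ℤ) < B'
        push_cast
        omega
      have h3 : CPIH.wind W.support (x - 1, y - 1 - (((y - B').toNat + 1 : ℕ) : ℤ)) = 0 :=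
        CPIH.wind_low W.support B' hsupB' _ h2
      rw [h1] at h3
      exact hC0 h3
    have hn0pos : 0 < Nat.find hex := by
      rcases Nat.eq_zero_or_pos (Nat.find hex) with h | h
      swap
      · exact h
      · exfalso
        have hspec := Nat.find_spec hex
        rw [h] at hspec
        apply hspec
        intro j hj
        have hj0 : j = 0 := Nat.le_zero.mp hj
        subst hj0
        constructor
        · norm_num
        · norm_num [hBB'.symm]
    have hQk : ∀ j : ℕ, j ≤ Nat.find hex - 1 →
        CPIH.wind W.support (x - 1, y - 1 - (j : ℤ)) = CPIH.wind W.support (x - 1, y - 1) ∧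
        CPIH.wind W.support (x, y - 1 - (j : ℤ)) = CPIH.wind W.support (x - 1, y - 1) :=
      not_not.mp (Nat.find_min hex (by omega))
    set k := Nat.find hex - 1 with hkdef
    have hnQ := Nat.find_spec hex
    rw [show Nat.find hex = k + 1 from by omega] at hnQ
    have hviol : ¬ (CPIH.wind W.support (x - 1, y - 1 - ((k + 1 : ℕ) : ℤ)) = CPIH.wind W.support (x - 1, y - 1) ∧
        CPIH.wind W.support (x, y - 1 - ((k + 1 : ℕ) : ℤ)) = CPIH.wind W.support (x - 1, y - 1)) := by
      intro hc
      apply hnQ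
      intro j hj
      rcases Nat.lt_or_ge j (k + 1) with hlt | hge
      · exact hQk j (by omega)
      · have hje : j = k + 1 := by omega
        subst hje
        exact hc
    rw [not_and_or] at hviol
    have hcast2 : y - 1 - ((k + 1 : ℕ) : ℤ) = y - 2 - (k : ℤ) := by push_cast; ring
    rw [hcast2] at hviol
    have hxh : ((x, y - (k : ℤ) - 1) : CPIH.Pt) ∈ W.support := by
      rcases hviol with hv1 | hv1
      · have hdv := CPIH.wind_diff_vert W.support hne hclosed hchain (x - 1) (y - 2 - (k : ℤ))
        rw [show y - 2 - (k : ℤ) + 1 = y - 1 - (k : ℤ) from by ring] at hdv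
        have hbase := (hQk k le_rfl).1
        have hnz : CPIH.esum W.support (CPIH.eta (x - 1) (y - 1 - (k : ℤ))) ≠ 0 := by
          rw [← hdv]
          intro hc
          apply hv1
          omega
        obtain ⟨pq, hpq, hne2⟩ := CPIH.esum_ne_exists _ _ hnz
        have hm := CPIH.mem_steps _ pq hpq
        rcases CPIH.eta_ne_cases _ _ _ _ hne2 with ⟨e1, e2, e3, e4⟩ | ⟨e1, e2, e3, e4⟩
        · have he : pq.2 = ((x, y - (k : ℤ) - 1) : CPIH.Pt) := Prod.ext (by omega) (by omega)
          rw [← he]; exact hm.2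
        · have he : pq.1 = ((x, y - (k : ℤ) - 1) : CPIH.Pt) := Prod.ext (by omega) (by omega)
          rw [← he]; exact hm.1
      · have hdv := CPIH.wind_diff_vert W.support hne hclosed hchain x (y - 2 - (k : ℤ))
        rw [show y - 2 - (k : ℤ) + 1 = y - 1 - (k : ℤ) from by ring] at hdv
        have hbase := (hQk k le_rfl).2
        have hnz : CPIH.esum W.support (CPIH.eta x (y - 1 - (k : ℤ))) ≠ 0 := by
          rw [← hdv]
          intro hc
          apply hv1
          omega
        obtain ⟨pq, hpq, hne2⟩ := CPIH.esum_ne_exists _ _ hnz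
        have hm := CPIH.mem_steps _ pq hpq
        rcases CPIH.eta_ne_cases _ _ _ _ hne2 with ⟨e1, e2, e3, e4⟩ | ⟨e1, e2, e3, e4⟩
        · have he : pq.1 = ((x, y - (k : ℤ) - 1) : CPIH.Pt) := Prod.ext (by omega) (by omega)
          rw [← he]; exact hm.1
        · have he : pq.2 = ((x, y - (k : ℤ) - 1) : CPIH.Pt) := Prod.ext (by omega) (by omega)
          rw [← he]; exact hm.2
    have hPmem : ∀ j : ℕ, j ≤ k + 1 → ((x, y - (j : ℤ)) : CPIH.Pt) ∈ S := by
      intro j hj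
      cases j with
      | zero =>
        have e : ((x, y - ((0 : ℕ) : ℤ)) : CPIH.Pt) = (v : CPIH.Pt) := by
          rw [hvpair, Prod.mk.injEq]
          constructor
          · rfl
          · norm_num
        rw [e]; exact v.2
      | succ jj =>
        have hwind : CPIH.wind W.support (x, y - 1 - (jj : ℤ)) ≠ 0 := by
          rw [(hQk jj (by omega)).2]; exact hC0
        have h6 := (hL6 x (y - 1 - (jj : ℤ)) hwind).1
        have e : ((x, y - ((jj + 1 : ℕ) : ℤ)) : CPIH.Pt) = (x, y - 1 - (jj : ℤ)) := by
          rw [Prod.mk.injEq]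
          constructor
          · rfl
          · push_cast; ring
        rw [e]; exact h6
    have hPdist : ∀ j : ℕ, j ≤ k + 1 → ∀ hm : ((x, y - (j : ℤ)) : CPIH.Pt) ∈ S,
        (gridGraph.induce S).dist v ⟨(x, y - (j : ℤ)), hm⟩ ≤ j := by
      intro j
      induction j with
      | zero =>
        intro _ hm
        have e : (⟨((x, y - ((0 : ℕ) : ℤ)) : CPIH.Pt), hm⟩ : ↥S) = v := by
          apply Subtype.ext
          show ((x, y - ((0 : ℕ) : ℤ)) : CPIH.Pt) = (v : CPIH.Pt)
          rw [hvpair, Prod.mk.injEq]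
          constructor
          · rfl
          · norm_num
        rw [e]
        simp [SimpleGraph.dist_self]
      | succ jj ih =>
        intro hj hm
        have hmj : ((x, y - (jj : ℤ)) : CPIH.Pt) ∈ S := hPmem jj (by omega)
        have hd1 := ih (by omega) hmj
        have hadjj : (gridGraph.induce S).Adj ⟨(x, y - (jj : ℤ)), hmj⟩
            ⟨(x, y - ((jj + 1 : ℕ) : ℤ)), hm⟩ := by
          show gridGraph.Adj ((x, y - (jj : ℤ)) : CPIH.Pt) ((x, y - ((jj + 1 : ℕ) : ℤ)) : CPIH.Pt)
          apply CPIH.grid_adj_coords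
          show |x - x| + |(y - (jj : ℤ)) - (y - ((jj + 1 : ℕ) : ℤ))| = 1
          rw [sub_self, show (y - (jj : ℤ)) - (y - ((jj + 1 : ℕ) : ℤ)) = 1 from by push_cast; ring,
            abs_one, abs_zero]
          ring
        have htri := hconn.dist_triangle (u := v) (v := ⟨(x, y - (jj : ℤ)), hmj⟩)
          (w := ⟨(x, y - ((jj + 1 : ℕ) : ℤ)), hm⟩)
        have hd2 : (gridGraph.induce S).dist ⟨(x, y - (jj : ℤ)), hmj⟩
            ⟨(x, y - ((jj + 1 : ℕ) : ℤ)), hm⟩ ≤ 1 := by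
          simpa using SimpleGraph.dist_le (SimpleGraph.Walk.cons hadjj SimpleGraph.Walk.nil)
        omega
    have ecoord : ((x, y - ((k + 1 : ℕ) : ℤ)) : CPIH.Pt) = (x, y - (k : ℤ) - 1) := by
      rw [Prod.mk.injEq]
      constructor
      · rfl
      · push_cast; ring
    have hmem_h : ((x, y - (k : ℤ) - 1) : CPIH.Pt) ∈ S := by
      have h := hPmem (k + 1) le_rfl
      rwa [ecoord] at h
    have hm' : ((x, y - ((k + 1 : ℕ) : ℤ)) : CPIH.Pt) ∈ S := by rw [ecoord]; exact hmem_h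
    have hdist_v_h : (gridGraph.induce S).dist v ⟨(x, y - (k : ℤ) - 1), hmem_h⟩ ≤ k + 1 := by
      have h := hPdist (k + 1) le_rfl hm'
      have e2 : (⟨((x, y - ((k + 1 : ℕ) : ℤ)) : CPIH.Pt), hm'⟩ : ↥S) =
          ⟨(x, y - (k : ℤ) - 1), hmem_h⟩ := Subtype.ext ecoord
      rwa [e2] at h
    rcases hmemC _ hxh with hcase | ⟨u, hu, hup⟩ | ⟨u, hu, hup⟩
    · rw [hvpair] at hcase
      have h := congrArg Prod.snd hcase
      simp only [] at h
      omega
    · have hsp := hsplitl u hu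
      obtain ⟨wvl, hwvl⟩ := (hreach vl u).exists_walk_length_eq_dist
      have hl1 := CPIH.walk_l1 wvl
      rw [hwvl, hvl, hup] at hl1
      have hl1' : (k : ℤ) + 2 ≤ ((gridGraph.induce S).dist vl u : ℤ) := by
        have e1 : |((x - 1, y) : CPIH.Pt).1 - ((x, y - (k : ℤ) - 1) : CPIH.Pt).1| = 1 := by
          show |x - 1 - x| = 1
          rw [show x - 1 - x = (-1 : ℤ) from by ring, abs_neg, abs_one]
        have e2 : |((x - 1, y) : CPIH.Pt).2 - ((x, y - (k : ℤ) - 1) : CPIH.Pt).2| = (k : ℤ) + 1 := by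
          show |y - (y - (k : ℤ) - 1)| = (k : ℤ) + 1
          rw [show y - (y - (k : ℤ) - 1) = (k : ℤ) + 1 from by ring]
          exact abs_of_nonneg (by positivity)
        rw [e1, e2] at hl1
        omega
      have huu : u = (⟨(x, y - (k : ℤ) - 1), hmem_h⟩ : ↥S) := Subtype.ext hup
      rw [huu] at hsp hl1'
      have htri := hconn.dist_triangle (u := v) (v := (⟨(x, y - (k : ℤ) - 1), hmem_h⟩ : ↥S)) (w := s)
      rw [hd] at htri
      have hl1n : k + 2 ≤ (gridGraph.induce S).dist vl (⟨(x, y - (k : ℤ) - 1), hmem_h⟩ : ↥S) := by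
        exact_mod_cast hl1'
      omega
    · have hsp := hsplitr u hu
      obtain ⟨wvr, hwvr⟩ := (hreach vr u).exists_walk_length_eq_dist
      have hl1 := CPIH.walk_l1 wvr
      rw [hwvr, hvr, hup] at hl1
      have hl1' : (k : ℤ) + 2 ≤ ((gridGraph.induce S).dist vr u : ℤ) := by
        have e1 : |((x + 1, y) : CPIH.Pt).1 - ((x, y - (k : ℤ) - 1) : CPIH.Pt).1| = 1 := by
          show |x + 1 - x| = 1
          rw [show x + 1 - x = (1 : ℤ) from by ring, abs_one]
        have e2 : |((x + 1, y) : CPIH.Pt).2 - ((x, y - (k : ℤ) - 1) : CPIH.Pt).2| = (k : ℤ) + 1 := by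
          show |y - (y - (k : ℤ) - 1)| = (k : ℤ) + 1
          rw [show y - (y - (k : ℤ) - 1) = (k : ℤ) + 1 from by ring]
          exact abs_of_nonneg (by positivity)
        rw [e1, e2] at hl1
        omega
      have huu : u = (⟨(x, y - (k : ℤ) - 1), hmem_h⟩ : ↥S) := Subtype.ext hup
      rw [huu] at hsp hl1'
      have htri := hconn.dist_triangle (u := v) (v := (⟨(x, y - (k : ℤ) - 1), hmem_h⟩ : ↥S)) (w := s)
      rw [hd] at htri
      have hl1n : k + 2 ≤ (gridGraph.induce S).dist vr (⟨(x, y - (k : ℤ) - 1), hmem_h⟩ : ↥S) := by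
        exact_mod_cast hl1'
      omega
  · -- UP case: the winding above the passage is nonzero
    have hex : ∃ n : ℕ, ¬ (∀ j : ℕ, j ≤ n →
        CPIH.wind W.support (x - 1, y + (j : ℤ)) = CPIH.wind W.support (x - 1, y) ∧
        CPIH.wind W.support (x, y + (j : ℤ)) = CPIH.wind W.support (x - 1, y)) := by
      refine ⟨(B - y).toNat + 1, fun hQ => ?_⟩
      have h1 := (hQ ((B - y).toNat + 1) le_rfl).1
      have h2 : B < ((x - 1 : ℤ), y + (((B - y).toNat + 1 : ℕ) : ℤ)).2 := by
        show B < y + (((B - y).toNat + 1 : ℕ) : ℤ)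
        push_cast
        omega
      have h3 : CPIH.wind W.support (x - 1, y + (((B - y).toNat + 1 : ℕ) : ℤ)) = 0 :=
        CPIH.wind_high W.support B hsupB _ h2
      rw [h1] at h3
      exact hA0 h3
    have hn0pos : 0 < Nat.find hex := by
      rcases Nat.eq_zero_or_pos (Nat.find hex) with h | h
      swap
      · exact h
      · exfalso
        have hspec := Nat.find_spec hex
        rw [h] at hspec
        apply hspec
        intro j hj
        have hj0 : j = 0 := Nat.le_zero.mp hj
        subst hj0
        constructor
        · norm_num
        · norm_num [hAA'.symm]
    have hQk : ∀ j : ℕ, j ≤ Nat.find hex - 1 →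
        CPIH.wind W.support (x - 1, y + (j : ℤ)) = CPIH.wind W.support (x - 1, y) ∧
        CPIH.wind W.support (x, y + (j : ℤ)) = CPIH.wind W.support (x - 1, y) :=
      not_not.mp (Nat.find_min hex (by omega))
    set k := Nat.find hex - 1 with hkdef
    have hnQ := Nat.find_spec hex
    rw [show Nat.find hex = k + 1 from by omega] at hnQ
    have hviol : ¬ (CPIH.wind W.support (x - 1, y + ((k + 1 : ℕ) : ℤ)) = CPIH.wind W.support (x - 1, y) ∧
        CPIH.wind W.support (x, y + ((k + 1 : ℕ) : ℤ)) = CPIH.wind W.support (x - 1, y)) := by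
      intro hc
      apply hnQ
      intro j hj
      rcases Nat.lt_or_ge j (k + 1) with hlt | hge
      · exact hQk j (by omega)
      · have hje : j = k + 1 := by omega
        subst hje
        exact hc
    rw [not_and_or] at hviol
    have hcast : ((k + 1 : ℕ) : ℤ) = (k : ℤ) + 1 := by push_cast; ring
    have hxh : ((x, y + (k : ℤ) + 1) : CPIH.Pt) ∈ W.support := by
      rcases hviol with hv1 | hv1
      · have hdv := CPIH.wind_diff_vert W.support hne hclosed hchain (x - 1) (y + (k : ℤ))
        have hbase := (hQk k le_rfl).1
        have hnz : CPIH.esum W.support (CPIH.eta (x - 1) (y + (k : ℤ) + 1)) ≠ 0 := by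
          rw [← hdv]
          intro hc
          apply hv1
          rw [hcast, show y + ((k : ℤ) + 1) = y + (k : ℤ) + 1 from by ring]
          omega
        obtain ⟨pq, hpq, hne2⟩ := CPIH.esum_ne_exists _ _ hnz
        have hm := CPIH.mem_steps _ pq hpq
        rcases CPIH.eta_ne_cases _ _ _ _ hne2 with ⟨e1, e2, e3, e4⟩ | ⟨e1, e2, e3, e4⟩
        · have he : pq.2 = ((x, y + (k : ℤ) + 1) : CPIH.Pt) := Prod.ext (by omega) (by omega)
          rw [← he]; exact hm.2
        · have he : pq.1 = ((x, y + (k : ℤ) + 1) : CPIH.Pt) := Prod.ext (by omega) (by omega)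
          rw [← he]; exact hm.1
      · have hdv := CPIH.wind_diff_vert W.support hne hclosed hchain x (y + (k : ℤ))
        have hbase := (hQk k le_rfl).2
        have hnz : CPIH.esum W.support (CPIH.eta x (y + (k : ℤ) + 1)) ≠ 0 := by
          rw [← hdv]
          intro hc
          apply hv1
          rw [hcast, show y + ((k : ℤ) + 1) = y + (k : ℤ) + 1 from by ring]
          omega
        obtain ⟨pq, hpq, hne2⟩ := CPIH.esum_ne_exists _ _ hnz
        have hm := CPIH.mem_steps _ pq hpq
        rcases CPIH.eta_ne_cases _ _ _ _ hne2 with ⟨e1, e2, e3, e4⟩ | ⟨e1, e2, e3, e4⟩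
        · have he : pq.1 = ((x, y + (k : ℤ) + 1) : CPIH.Pt) := Prod.ext (by omega) (by omega)
          rw [← he]; exact hm.1
        · have he : pq.2 = ((x, y + (k : ℤ) + 1) : CPIH.Pt) := Prod.ext (by omega) (by omega)
          rw [← he]; exact hm.2
    have hPmem : ∀ j : ℕ, j ≤ k + 1 → ((x, y + (j : ℤ)) : CPIH.Pt) ∈ S := by
      intro j hj
      cases j with
      | zero =>
        have e : ((x, y + ((0 : ℕ) : ℤ)) : CPIH.Pt) = (v : CPIH.Pt) := by
          rw [hvpair, Prod.mk.injEq]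
          constructor
          · rfl
          · norm_num
        rw [e]; exact v.2
      | succ jj =>
        have hwind : CPIH.wind W.support (x, y + (jj : ℤ)) ≠ 0 := by
          rw [(hQk jj (by omega)).2]; exact hA0
        have h6 := (hL6 x (y + (jj : ℤ)) hwind).2.2.1
        have e : ((x, y + ((jj + 1 : ℕ) : ℤ)) : CPIH.Pt) = (x, y + (jj : ℤ) + 1) := by
          rw [Prod.mk.injEq]
          constructor
          · rfl
          · push_cast; ring
        rw [e]; exact h6
    have hPdist : ∀ j : ℕ, j ≤ k + 1 → ∀ hm : ((x, y + (j : ℤ)) : CPIH.Pt) ∈ S,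
        (gridGraph.induce S).dist v ⟨(x, y + (j : ℤ)), hm⟩ ≤ j := by
      intro j
      induction j with
      | zero =>
        intro _ hm
        have e : (⟨((x, y + ((0 : ℕ) : ℤ)) : CPIH.Pt), hm⟩ : ↥S) = v := by
          apply Subtype.ext
          show ((x, y + ((0 : ℕ) : ℤ)) : CPIH.Pt) = (v : CPIH.Pt)
          rw [hvpair, Prod.mk.injEq]
          constructor
          · rfl
          · norm_num
        rw [e]
        simp [SimpleGraph.dist_self]
      | succ jj ih =>
        intro hj hm
        have hmj : ((x, y + (jj : ℤ)) : CPIH.Pt) ∈ S := hPmem jj (by omega)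
        have hd1 := ih (by omega) hmj
        have hadjj : (gridGraph.induce S).Adj ⟨(x, y + (jj : ℤ)), hmj⟩
            ⟨(x, y + ((jj + 1 : ℕ) : ℤ)), hm⟩ := by
          show gridGraph.Adj ((x, y + (jj : ℤ)) : CPIH.Pt) ((x, y + ((jj + 1 : ℕ) : ℤ)) : CPIH.Pt)
          apply CPIH.grid_adj_coords
          show |x - x| + |(y + (jj : ℤ)) - (y + ((jj + 1 : ℕ) : ℤ))| = 1
          rw [sub_self, show (y + (jj : ℤ)) - (y + ((jj + 1 : ℕ) : ℤ)) = -1 from by push_cast; ring,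
            abs_neg, abs_one, abs_zero]
          ring
        have htri := hconn.dist_triangle (u := v) (v := ⟨(x, y + (jj : ℤ)), hmj⟩)
          (w := ⟨(x, y + ((jj + 1 : ℕ) : ℤ)), hm⟩)
        have hd2 : (gridGraph.induce S).dist ⟨(x, y + (jj : ℤ)), hmj⟩
            ⟨(x, y + ((jj + 1 : ℕ) : ℤ)), hm⟩ ≤ 1 := by
          simpa using SimpleGraph.dist_le (SimpleGraph.Walk.cons hadjj SimpleGraph.Walk.nil)
        omega
    have ecoord : ((x, y + ((k + 1 : ℕ) : ℤ)) : CPIH.Pt) = (x, y + (k : ℤ) + 1) := by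
      rw [Prod.mk.injEq]
      constructor
      · rfl
      · push_cast; ring
    have hmem_h : ((x, y + (k : ℤ) + 1) : CPIH.Pt) ∈ S := by
      have h := hPmem (k + 1) le_rfl
      rwa [ecoord] at h
    have hm' : ((x, y + ((k + 1 : ℕ) : ℤ)) : CPIH.Pt) ∈ S := by rw [ecoord]; exact hmem_h
    have hdist_v_h : (gridGraph.induce S).dist v ⟨(x, y + (k : ℤ) + 1), hmem_h⟩ ≤ k + 1 := by
      have h := hPdist (k + 1) le_rfl hm'
      have e2 : (⟨((x, y + ((k + 1 : ℕ) : ℤ)) : CPIH.Pt), hm'⟩ : ↥S) =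
          ⟨(x, y + (k : ℤ) + 1), hmem_h⟩ := Subtype.ext ecoord
      rwa [e2] at h
    rcases hmemC _ hxh with hcase | ⟨u, hu, hup⟩ | ⟨u, hu, hup⟩
    · rw [hvpair] at hcase
      have h := congrArg Prod.snd hcase
      simp only [] at h
      omega
    · have hsp := hsplitl u hu
      obtain ⟨wvl, hwvl⟩ := (hreach vl u).exists_walk_length_eq_dist
      have hl1 := CPIH.walk_l1 wvl
      rw [hwvl, hvl, hup] at hl1
      have hl1' : (k : ℤ) + 2 ≤ ((gridGraph.induce S).dist vl u : ℤ) := by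
        have e1 : |((x - 1, y) : CPIH.Pt).1 - ((x, y + (k : ℤ) + 1) : CPIH.Pt).1| = 1 := by
          show |x - 1 - x| = 1
          rw [show x - 1 - x = (-1 : ℤ) from by ring, abs_neg, abs_one]
        have e2 : |((x - 1, y) : CPIH.Pt).2 - ((x, y + (k : ℤ) + 1) : CPIH.Pt).2| = (k : ℤ) + 1 := by
          show |y - (y + (k : ℤ) + 1)| = (k : ℤ) + 1
          rw [show y - (y + (k : ℤ) + 1) = -((k : ℤ) + 1) from by ring, abs_neg]
          exact abs_of_nonneg (by positivity)
        rw [e1, e2] at hl1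
        omega
      have huu : u = (⟨(x, y + (k : ℤ) + 1), hmem_h⟩ : ↥S) := Subtype.ext hup
      rw [huu] at hsp hl1'
      have htri := hconn.dist_triangle (u := v) (v := (⟨(x, y + (k : ℤ) + 1), hmem_h⟩ : ↥S)) (w := s)
      rw [hd] at htri
      have hl1n : k + 2 ≤ (gridGraph.induce S).dist vl (⟨(x, y + (k : ℤ) + 1), hmem_h⟩ : ↥S) := by
        exact_mod_cast hl1'
      omega
    · have hsp := hsplitr u hu
      obtain ⟨wvr, hwvr⟩ := (hreach vr u).exists_walk_length_eq_dist
      have hl1 := CPIH.walk_l1 wvr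
      rw [hwvr, hvr, hup] at hl1
      have hl1' : (k : ℤ) + 2 ≤ ((gridGraph.induce S).dist vr u : ℤ) := by
        have e1 : |((x + 1, y) : CPIH.Pt).1 - ((x, y + (k : ℤ) + 1) : CPIH.Pt).1| = 1 := by
          show |x + 1 - x| = 1
          rw [show x + 1 - x = (1 : ℤ) from by ring, abs_one]
        have e2 : |((x + 1, y) : CPIH.Pt).2 - ((x, y + (k : ℤ) + 1) : CPIH.Pt).2| = (k : ℤ) + 1 := by
          show |y - (y + (k : ℤ) + 1)| = (k : ℤ) + 1
          rw [show y - (y + (k : ℤ) + 1) = -((k : ℤ) + 1) from by ring, abs_neg]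
          exact abs_of_nonneg (by positivity)
        rw [e1, e2] at hl1
        omega
      have huu : u = (⟨(x, y + (k : ℤ) + 1), hmem_h⟩ : ↥S) := Subtype.ext hup
      rw [huu] at hsp hl1'
      have htri := hconn.dist_triangle (u := v) (v := (⟨(x, y + (k : ℤ) + 1), hmem_h⟩ : ↥S)) (w := s)
      rw [hd] at htri
      have hl1n : k + 2 ≤ (gridGraph.induce S).dist vr (⟨(x, y + (k : ℤ) + 1), hmem_h⟩ : ↥S) := by
        exact_mod_cast hl1'
      omega
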